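/- Let C be a binary self-dual singly-even code of length n whose shadow S (the set C₀^⊥ \ C, where C₀ is the doubly-even subcode) has minimum Hamming weight d. Then the weight enumerator A_C(x,y) of C is divisible by (x² + y²)^d in ℂ[x,y]. -/

import Mathlib

open MvPolynomial Finset

/-- Weight enumerator of a set of binary words, as a polynomial in two variables. -/
noncomputable def wEnum (n : ℕ) (S : Set (Fin n → ZMod 2)) : MvPolynomial (Fin 2) ℂ :=
  ∑ c : Fin n → ZMod 2,
    Set.indicator S (fun c => (X 0) ^ (n - hammingNorm c) * (X 1) ^ (hammingNorm c)) c

/-- The dual (orthogonal) set of a set of binary words. -/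
def dualSet (n : ℕ) (S : Set (Fin n → ZMod 2)) : Set (Fin n → ZMod 2) :=
  {v | ∀ c ∈ S, ∑ i, v i * c i = 0}

namespace Stmt12Aux

variable {n : ℕ}

/-- The quadratic character of `ZMod 2` in `ℂ`. -/
noncomputable def χ (a : ZMod 2) : ℂ := if a = 0 then 1 else -1

lemma χ_zero : χ (0 : ZMod 2) = 1 := by simp [χ]

lemma χ_one : χ (1 : ZMod 2) = -1 := by simp [χ]

lemma χ_add (a b : ZMod 2) : χ (a + b) = χ a * χ b := by
  fin_cases a <;> fin_cases b <;> simp [χ] <;> first | rfl | decide | (split_ifs <;> simp_all <;> contradiction)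

lemma χ_sum {ι : Type*} (s : Finset ι) (g : ι → ZMod 2) :
    χ (∑ i ∈ s, g i) = ∏ i ∈ s, χ (g i) := by
  classical
  induction s using Finset.induction with
  | empty => simp [χ_zero]
  | insert _ _ h ih => rw [Finset.sum_insert h, Finset.prod_insert h, χ_add, ih]

/-- The finset underlying a set of words. -/
noncomputable def FA (A : Set (Fin n → ZMod 2)) : Finset (Fin n → ZMod 2) :=
  (Set.toFinite A).toFinset

lemma mem_FA {A : Set (Fin n → ZMod 2)} {v : Fin n → ZMod 2} : v ∈ FA A ↔ v ∈ A :=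
  Set.Finite.mem_toFinset _

lemma sum_indicator {M : Type*} [AddCommMonoid M] (A : Set (Fin n → ZMod 2))
    (f : (Fin n → ZMod 2) → M) :
    ∑ v : Fin n → ZMod 2, A.indicator f v = ∑ v ∈ FA A, f v := by
  classical
  have h : ∀ v, A.indicator f v = if v ∈ FA A then f v else 0 := by
    intro v; by_cases h : v ∈ A <;> simp [Set.indicator_apply, h, mem_FA]
  simp_rw [h]
  rw [Finset.sum_ite_mem, Finset.univ_inter]

lemma card_FA (A : Set (Fin n → ZMod 2)) : (FA A).card = Nat.card A := by
  rw [Nat.card_coe_set_eq, Set.ncard_eq_toFinset_card A (Set.toFinite A)]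
  rfl


/-- The standard bilinear (dot-product) form on `Fin n → ZMod 2`. -/
noncomputable def Bf (n : ℕ) : LinearMap.BilinForm (ZMod 2) (Fin n → ZMod 2) :=
  Matrix.toBilin' 1

lemma Bf_apply (v w : Fin n → ZMod 2) : Bf n v w = ∑ i, v i * w i := by
  simp [Bf, Matrix.toBilin'_apply', dotProduct]

lemma Bf_nondeg : (Bf n).Nondegenerate := by
  refine ⟨fun v hv => ?_, fun v hv => ?_⟩ <;>
  · funext j
    have := hv (Pi.single j 1)
    rw [Bf_apply] at this
    simpa [Pi.single_apply, Finset.sum_ite_eq] using this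

lemma Bf_refl : (Bf n).IsRefl := by
  intro v w h
  rw [Bf_apply] at h ⊢
  simpa [mul_comm] using h

lemma coe_orth (U : Submodule (ZMod 2) (Fin n → ZMod 2)) :
    ((Bf n).orthogonal U : Set (Fin n → ZMod 2)) = dualSet n ↑U := by
  ext v
  simp only [SetLike.mem_coe, LinearMap.BilinForm.mem_orthogonal_iff, dualSet, Set.mem_setOf_eq,
    LinearMap.BilinForm.IsOrtho, Bf_apply]
  constructor
  · intro h c hc
    simpa [mul_comm] using h c hc
  · intro h c hc
    simpa [mul_comm] using h c hc

lemma card_submodule (U : Submodule (ZMod 2) (Fin n → ZMod 2)) :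
    Nat.card U = 2 ^ (Module.finrank (ZMod 2) U) := by
  classical
  haveI : Fintype U := Fintype.ofFinite _
  rw [Nat.card_eq_fintype_card, Module.card_eq_pow_finrank (K := ZMod 2), ZMod.card]

lemma card_dual_mul_card (U : Submodule (ZMod 2) (Fin n → ZMod 2)) :
    Nat.card (dualSet n ↑U) * Nat.card U = 2 ^ n := by
  have h1 : dualSet n ↑U = ((Bf n).orthogonal U : Set (Fin n → ZMod 2)) := (coe_orth U).symm
  rw [h1]
  have h2 : Nat.card ((Bf n).orthogonal U : Set (Fin n → ZMod 2)) =
      2 ^ (Module.finrank (ZMod 2) ((Bf n).orthogonal U)) := card_submodule _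
  rw [h2, card_submodule U,
    LinearMap.BilinForm.finrank_orthogonal Bf_nondeg U]
  have h3 : Module.finrank (ZMod 2) (Fin n → ZMod 2) = n := by
    simp [Module.finrank_pi]
  have h4 : Module.finrank (ZMod 2) U ≤ n := by
    have := Submodule.finrank_le U
    omega
  rw [h3, pow_sub_mul_pow 2 h4]


lemma zmod2_cases : ∀ x : ZMod 2, x = 0 ∨ x = 1 := by decide

open scoped Classical in
/-- Character sum over a submodule. -/
lemma char_sum (U : Submodule (ZMod 2) (Fin n → ZMod 2)) (c : Fin n → ZMod 2) :
    ∑ v ∈ FA (↑U : Set (Fin n → ZMod 2)), χ (∑ i, v i * c i) =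
      if c ∈ dualSet n ↑U then (Nat.card U : ℂ) else 0 := by
  classical
  by_cases hc : c ∈ dualSet n ↑U
  · rw [if_pos hc]
    have h1 : ∀ v ∈ FA (↑U : Set (Fin n → ZMod 2)), χ (∑ i, v i * c i) = 1 := by
      intro v hv
      rw [mem_FA] at hv
      have h2 : (∑ i, c i * v i) = 0 := hc v hv
      rw [show (∑ i, v i * c i) = ∑ i, c i * v i by simp [mul_comm], h2, χ_zero]
    rw [Finset.sum_congr rfl h1, Finset.sum_const, card_FA]
    simp only [nsmul_eq_mul, mul_one]
    norm_cast
  · rw [if_neg hc]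
    simp only [dualSet, Set.mem_setOf_eq, not_forall] at hc
    obtain ⟨v₀, hv₀U, hv₀⟩ := hc
    have hv₀U' : v₀ ∈ U := hv₀U
    have h1 : (∑ i, v₀ i * c i) = 1 := by
      have : ∀ x : ZMod 2, x ≠ 0 → x = 1 := by decide
      rw [show (∑ i, v₀ i * c i) = ∑ i, c i * v₀ i by simp [mul_comm]]
      exact this _ hv₀
    set S := ∑ v ∈ FA (↑U : Set (Fin n → ZMod 2)), χ (∑ i, v i * c i) with hS
    have himg : Finset.image (fun v => v₀ + v) (FA (↑U : Set (Fin n → ZMod 2)))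
        = FA (↑U : Set (Fin n → ZMod 2)) := by
      apply Finset.eq_of_subset_of_card_le
      · intro x hx
        simp only [Finset.mem_image] at hx
        obtain ⟨y, hy, rfl⟩ := hx
        rw [mem_FA] at hy ⊢
        exact U.add_mem hv₀U' hy
      · rw [Finset.card_image_of_injective _ (add_right_injective v₀)]
    have hneg : S = -S := by
      conv_lhs => rw [hS, ← himg]
      rw [Finset.sum_image (by intro x _ y _ h; exact add_left_cancel h)]
      have h2 : ∀ v ∈ FA (↑U : Set (Fin n → ZMod 2)),
          χ (∑ i, (v₀ + v) i * c i) = - χ (∑ i, v i * c i) := by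
        intro v hv
        have h3 : (∑ i, (v₀ + v) i * c i) = (∑ i, v₀ i * c i) + ∑ i, v i * c i := by
          rw [← Finset.sum_add_distrib]
          exact Finset.sum_congr rfl fun i _ => by simp [add_mul]
        rw [h3, χ_add, h1, χ_one]
        ring
      rw [Finset.sum_congr rfl h2, Finset.sum_neg_distrib]
    have : S + S = 0 := by linear_combination hneg
    have h4 : (2 : ℂ) * S = 0 := by ring_nf; linear_combination this
    have := mul_eq_zero.mp h4
    simp at this
    exact this

lemma zmod2_ne_zero_iff : ∀ x : ZMod 2, x ≠ 0 ↔ x = 1 := by decide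

/-- Casting the Hamming weight into `ZMod 2` gives the coordinate sum. -/
lemma cast_hammingNorm (c : Fin n → ZMod 2) :
    ((hammingNorm c : ℕ) : ZMod 2) = ∑ i, c i := by
  classical
  have h : ∀ i, c i = if c i ≠ 0 then (1 : ZMod 2) else 0 := by
    intro i
    by_cases h : c i = 0
    · simp [h]
    · simp [h, (zmod2_ne_zero_iff (c i)).mp h]
  rw [show (∑ i, c i) = ∑ i, if c i ≠ 0 then (1 : ZMod 2) else 0 from
    Finset.sum_congr rfl fun i _ => h i]
  rw [Finset.sum_boole]
  rfl

/-- The intersection of supports of orthogonal words is even. -/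
lemma inter_card_even (a b : Fin n → ZMod 2) (h : (∑ i, a i * b i) = 0) :
    (Finset.univ.filter (fun i => a i ≠ 0 ∧ b i ≠ 0)).card % 2 = 0 := by
  classical
  have h1 : ∀ i, a i * b i = if a i ≠ 0 ∧ b i ≠ 0 then (1 : ZMod 2) else 0 := by
    intro i
    rcases zmod2_cases (a i) with h2 | h2 <;> rcases zmod2_cases (b i) with h3 | h3 <;>
      simp [h2, h3]
  rw [show (∑ i, a i * b i) = ∑ i, if a i ≠ 0 ∧ b i ≠ 0 then (1 : ZMod 2) else 0 from
    Finset.sum_congr rfl fun i _ => h1 i, Finset.sum_boole] at h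
  have := (ZMod.natCast_eq_zero_iff _ 2).mp h
  omega

/-- Mod-4 additivity of Hamming weight for orthogonal words. -/
lemma wt_add_mod4 (a b : Fin n → ZMod 2) (h : (∑ i, a i * b i) = 0) :
    hammingNorm (a + b) % 4 = (hammingNorm a + hammingNorm b) % 4 := by
  classical
  set A := Finset.univ.filter (fun i => a i ≠ 0) with hA
  set B := Finset.univ.filter (fun i => b i ≠ 0) with hB
  have hwa : hammingNorm a = A.card := by simp [hammingNorm, hA]
  have hwb : hammingNorm b = B.card := by simp [hammingNorm, hB]
  have hfab : hammingNorm (a + b) = ((A \ B) ∪ (B \ A)).card := by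
    rw [hammingNorm]
    congr 1
    ext i
    simp only [Finset.mem_filter, Finset.mem_univ, true_and, Finset.mem_union,
      Finset.mem_sdiff, hA, hB, Pi.add_apply]
    rcases zmod2_cases (a i) with h2 | h2 <;> rcases zmod2_cases (b i) with h3 | h3 <;>
      simp only [h2, h3] <;> decide
  have hAB : A ∩ B = Finset.univ.filter (fun i => a i ≠ 0 ∧ b i ≠ 0) := by
    rw [hA, hB, ← Finset.filter_and]
  have hk : (A ∩ B).card % 2 = 0 := by rw [hAB]; exact inter_card_even a b h
  have h1 : (A ∩ B).card + (A \ B).card = A.card := Finset.card_inter_add_card_sdiff A B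
  have h2 : (B ∩ A).card + (B \ A).card = B.card := Finset.card_inter_add_card_sdiff B A
  have h3 : (B ∩ A).card = (A ∩ B).card := by rw [Finset.inter_comm]
  have h4 : ((A \ B) ∪ (B \ A)).card = (A \ B).card + (B \ A).card :=
    Finset.card_union_of_disjoint disjoint_sdiff_sdiff
  omega


/-- Support of a word, as a finset. -/
def toSet (c : Fin n → ZMod 2) : Finset (Fin n) :=
  Finset.univ.filter (fun j => c j ≠ 0)

lemma toSet_bijective : Function.Bijective (toSet (n := n)) := by
  constructor
  · intro c₁ c₂ h
    funext j
    rcases zmod2_cases (c₁ j) with h1 | h1 <;> rcases zmod2_cases (c₂ j) with h2 | h2 <;>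
      rw [h1, h2] <;> first
      | rfl
      | · exfalso
          have := Finset.ext_iff.mp h j
          simp [toSet, h1, h2] at this
  · intro t
    refine ⟨fun j => if j ∈ t then (1 : ZMod 2) else 0, ?_⟩
    ext j
    by_cases h : j ∈ t <;> simp [toSet, h]

lemma card_toSet (c : Fin n → ZMod 2) : (toSet c).card = hammingNorm c := by
  rw [toSet, hammingNorm]

lemma sum_toSet (v c : Fin n → ZMod 2) : (∑ i ∈ toSet c, v i) = ∑ i, v i * c i := by
  classical
  rw [toSet, Finset.sum_filter]
  refine Finset.sum_congr rfl fun i _ => ?_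
  rcases zmod2_cases (c i) with h | h <;> simp [h]

open scoped Classical in
/-- Expansion of the product `∏ (x - (-1)^{v i} i y)` over words `c`. -/
lemma prod_expand (v : Fin n → ZMod 2) :
    (∏ i : Fin n, ((X 0 : MvPolynomial (Fin 2) ℂ) + (χ (v i) * (-Complex.I)) • X 1))
    = ∑ c : Fin n → ZMod 2, ((χ (∑ i, v i * c i)) * (-Complex.I) ^ (hammingNorm c)) •
        ((X 0 : MvPolynomial (Fin 2) ℂ) ^ (n - hammingNorm c) * (X 1) ^ (hammingNorm c)) := by
  classical
  have step1 : (∏ i : Fin n, ((X 0 : MvPolynomial (Fin 2) ℂ) + (χ (v i) * (-Complex.I)) • X 1))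
      = ∏ i : Fin n, (((χ (v i) * (-Complex.I)) • (X 1 : MvPolynomial (Fin 2) ℂ)) + X 0) :=
    Finset.prod_congr rfl fun i _ => add_comm _ _
  rw [step1, Finset.prod_add]
  rw [show Finset.univ.powerset = (Finset.univ : Finset (Finset (Fin n))) from
    Finset.powerset_univ]
  refine (Fintype.sum_bijective toSet toSet_bijective _ _ fun c => ?_).symm
  -- per-term identity
  have hcard : (toSet c).card = hammingNorm c := card_toSet c
  have hwle : hammingNorm c ≤ n := by
    rw [← hcard]
    exact le_trans (Finset.card_le_univ _) (by simp)
  have h1 : (∏ i ∈ (Finset.univ \ toSet c), (X 0 : MvPolynomial (Fin 2) ℂ))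
      = (X 0 : MvPolynomial (Fin 2) ℂ) ^ (n - hammingNorm c) := by
    rw [Finset.prod_const, Finset.card_sdiff_of_subset (Finset.subset_univ _), hcard]
    congr 1
    simp
  have h2 : (∏ i ∈ toSet c, ((χ (v i) * (-Complex.I)) • (X 1 : MvPolynomial (Fin 2) ℂ)))
      = (χ (∑ i, v i * c i) * (-Complex.I) ^ (hammingNorm c)) •
          (X 1 : MvPolynomial (Fin 2) ℂ) ^ (hammingNorm c) := by
    simp_rw [smul_eq_C_mul]
    rw [Finset.prod_mul_distrib, Finset.prod_const, ← map_prod, hcard]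
    congr 2
    rw [Finset.prod_mul_distrib, Finset.prod_const, hcard, ← χ_sum, sum_toSet]
  rw [h2]
  rw [smul_mul_assoc, h1, mul_comm ((X 0 : MvPolynomial (Fin 2) ℂ) ^ (n - hammingNorm c))]


lemma negI_sq : (-Complex.I) ^ 2 = -1 := by
  rw [neg_sq, Complex.I_sq]

lemma negI_pow_four : (-Complex.I) ^ 4 = 1 := by
  rw [show (4 : ℕ) = 2 * 2 from rfl, pow_mul, negI_sq]
  norm_num

lemma negI_pow_mod4_zero {m : ℕ} (h : m % 4 = 0) : (-Complex.I) ^ m = 1 := by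
  obtain ⟨k, rfl⟩ : ∃ k, m = 4 * k := ⟨m / 4, by omega⟩
  rw [pow_mul, negI_pow_four, one_pow]

lemma negI_pow_mod4_two {m : ℕ} (h : m % 4 = 2) : (-Complex.I) ^ m = -1 := by
  obtain ⟨k, rfl⟩ : ∃ k, m = 4 * k + 2 := ⟨m / 4, by omega⟩
  rw [pow_add, pow_mul, negI_pow_four, one_pow, one_mul, negI_sq]

open scoped Classical in
/-- MacWilliams-type transform: sum of factored products over a submodule. -/
lemma sum_prod (U : Submodule (ZMod 2) (Fin n → ZMod 2)) :
    (∑ v ∈ FA (↑U : Set (Fin n → ZMod 2)),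
        ∏ i : Fin n, ((X 0 : MvPolynomial (Fin 2) ℂ) + (χ (v i) * (-Complex.I)) • X 1))
    = (Nat.card U : ℂ) • ∑ c ∈ FA (dualSet n ↑U), ((-Complex.I) ^ (hammingNorm c)) •
        ((X 0 : MvPolynomial (Fin 2) ℂ) ^ (n - hammingNorm c) * (X 1) ^ (hammingNorm c)) := by
  classical
  simp_rw [prod_expand]
  rw [Finset.sum_comm]
  have h1 : ∀ c : Fin n → ZMod 2,
      (∑ v ∈ FA (↑U : Set (Fin n → ZMod 2)),
          (χ (∑ i, v i * c i) * (-Complex.I) ^ (hammingNorm c)) •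
          ((X 0 : MvPolynomial (Fin 2) ℂ) ^ (n - hammingNorm c) * (X 1) ^ (hammingNorm c)))
      = (if c ∈ FA (dualSet n ↑U) then
          ((Nat.card U : ℂ) * (-Complex.I) ^ (hammingNorm c)) •
          ((X 0 : MvPolynomial (Fin 2) ℂ) ^ (n - hammingNorm c) * (X 1) ^ (hammingNorm c))
        else 0) := by
    intro c
    have h2 : (∑ v ∈ FA (↑U : Set (Fin n → ZMod 2)),
        (χ (∑ i, v i * c i) * (-Complex.I) ^ (hammingNorm c)) •
        ((X 0 : MvPolynomial (Fin 2) ℂ) ^ (n - hammingNorm c) * (X 1) ^ (hammingNorm c)))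
        = ((∑ v ∈ FA (↑U : Set (Fin n → ZMod 2)), χ (∑ i, v i * c i)) *
            (-Complex.I) ^ (hammingNorm c)) •
          ((X 0 : MvPolynomial (Fin 2) ℂ) ^ (n - hammingNorm c) * (X 1) ^ (hammingNorm c)) := by
      rw [Finset.sum_mul, Finset.sum_smul]
    rw [h2, char_sum U c]
    by_cases hc : c ∈ dualSet n ↑U
    · rw [if_pos hc, if_pos (mem_FA.mpr hc)]
    · rw [if_neg hc, if_neg (fun hh => hc (mem_FA.mp hh)), zero_mul, zero_smul]
  rw [Finset.sum_congr rfl fun c _ => h1 c, Finset.sum_ite_mem, Finset.univ_inter,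
    Finset.smul_sum]
  exact Finset.sum_congr rfl fun c _ => (mul_smul _ _ _)


open scoped Classical in
/-- The factored form of the product. -/
lemma prod_factored (v : Fin n → ZMod 2) :
    (∏ i : Fin n, ((X 0 : MvPolynomial (Fin 2) ℂ) + (χ (v i) * (-Complex.I)) • X 1))
    = ((X 0 : MvPolynomial (Fin 2) ℂ) - Complex.I • X 1) ^ (n - hammingNorm v) *
      ((X 0 : MvPolynomial (Fin 2) ℂ) + Complex.I • X 1) ^ (hammingNorm v) := by
  classical
  rw [← Finset.prod_filter_mul_prod_filter_not Finset.univ (fun i => v i ≠ 0)]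
  have hA : ∀ i ∈ Finset.univ.filter (fun i => v i ≠ 0),
      ((X 0 : MvPolynomial (Fin 2) ℂ) + (χ (v i) * (-Complex.I)) • X 1)
        = (X 0 : MvPolynomial (Fin 2) ℂ) + Complex.I • X 1 := by
    intro i hi
    rw [Finset.mem_filter] at hi
    rw [(zmod2_ne_zero_iff _).mp hi.2, χ_one]
    norm_num
  have hB : ∀ i ∈ Finset.univ.filter (fun i => ¬ v i ≠ 0),
      ((X 0 : MvPolynomial (Fin 2) ℂ) + (χ (v i) * (-Complex.I)) • X 1)
        = (X 0 : MvPolynomial (Fin 2) ℂ) - Complex.I • X 1 := by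
    intro i hi
    rw [Finset.mem_filter] at hi
    have h0 : v i = 0 := not_not.mp hi.2
    rw [h0, χ_zero, one_mul, neg_smul, ← sub_eq_add_neg]
  rw [Finset.prod_congr rfl hA, Finset.prod_congr rfl hB, Finset.prod_const, Finset.prod_const]
  have h1 : (Finset.univ.filter (fun i => v i ≠ 0)).card = hammingNorm v := rfl
  have h2 : (Finset.univ.filter (fun i => ¬ v i ≠ 0)).card = n - hammingNorm v := by
    have h3 := Finset.card_filter_add_card_filter_not
      (s := (Finset.univ : Finset (Fin n))) (p := fun i => v i ≠ 0)
    have h4 : (Finset.univ : Finset (Fin n)).card = n := by simp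
    omega
  rw [h1, h2, mul_comm]

lemma zmod2_add_self (x : ZMod 2) : x + x = 0 := by
  rcases zmod2_cases x with h | h <;> rw [h] <;> decide

/-- Complementation and Hamming weight. -/
lemma wt_compl (s : Fin n → ZMod 2) :
    hammingNorm (s + fun _ => (1 : ZMod 2)) = n - hammingNorm s := by
  classical
  rw [show hammingNorm (s + fun _ => (1 : ZMod 2))
      = (Finset.univ.filter (fun i => s i + 1 ≠ 0)).card from rfl]
  rw [show hammingNorm s = (Finset.univ.filter (fun i => s i ≠ 0)).card from rfl]
  have h : (Finset.univ.filter (fun i => s i + 1 ≠ 0))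
      = Finset.univ \ (Finset.univ.filter (fun i => s i ≠ 0)) := by
    ext i
    simp only [Finset.mem_filter, Finset.mem_univ, true_and, Finset.mem_sdiff]
    rcases zmod2_cases (s i) with h1 | h1 <;> rw [h1] <;> decide
  rw [h, Finset.card_sdiff_of_subset (Finset.subset_univ _)]
  simp

lemma hammingNorm_le_n (s : Fin n → ZMod 2) : hammingNorm s ≤ n := by
  rw [hammingNorm]
  exact le_trans (Finset.card_le_univ _) (by simp)

end Stmt12Aux

open Stmt12Aux in
theorem stmt12 (n d : ℕ) (C : Submodule (ZMod 2) (Fin n → ZMod 2))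
    (hsd : (C : Set (Fin n → ZMod 2)) = dualSet n C)
    (hsing : ∃ c ∈ C, hammingNorm c % 4 = 2)
    (hd1 : ∀ s ∈ dualSet n {c | c ∈ C ∧ hammingNorm c % 4 = 0} \ C, d ≤ hammingNorm s)
    (hd2 : ∃ s ∈ dualSet n {c | c ∈ C ∧ hammingNorm c % 4 = 0} \ C, hammingNorm s = d) :
    ((X 0) ^ 2 + (X 1) ^ 2) ^ d ∣ wEnum n C := by
  classical
  set C0set : Set (Fin n → ZMod 2) := {c | c ∈ C ∧ hammingNorm c % 4 = 0} with hC0set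
  -- basic orthogonality facts
  have hCC : ∀ a ∈ C, ∀ b ∈ C, (∑ i, a i * b i) = (0 : ZMod 2) := by
    intro a ha b hb
    have ha' : a ∈ dualSet n ↑C := by rw [← hsd]; exact ha
    exact ha' b hb
  have hsum0 : ∀ c ∈ C, (∑ i, c i) = (0 : ZMod 2) := by
    intro c hc
    have hmulself : ∀ x : ZMod 2, x = x * x := by decide
    rw [show (∑ i, c i) = ∑ i, c i * c i from
      Finset.sum_congr rfl fun i _ => hmulself (c i)]
    exact hCC c hc c hc
  have hEven : ∀ c ∈ C, hammingNorm c % 2 = 0 := by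
    intro c hc
    have h := cast_hammingNorm c
    rw [hsum0 c hc] at h
    have := (ZMod.natCast_eq_zero_iff _ 2).mp h
    omega
  have hmod4 : ∀ a ∈ C, ∀ b ∈ C,
      hammingNorm (a + b) % 4 = (hammingNorm a + hammingNorm b) % 4 :=
    fun a ha b hb => wt_add_mod4 a b (hCC a ha b hb)
  -- the doubly even subcode as a submodule
  let Csub : Submodule (ZMod 2) (Fin n → ZMod 2) :=
    { carrier := C0set
      add_mem' := by
        rintro a b ⟨haC, ha4⟩ ⟨hbC, hb4⟩
        refine ⟨C.add_mem haC hbC, ?_⟩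
        rw [hmod4 a haC b hbC]
        omega
      zero_mem' := ⟨C.zero_mem, by simp [hammingNorm]⟩
      smul_mem' := by
        intro r x hx
        rcases zmod2_cases r with h | h
        · rw [h, zero_smul]
          exact ⟨C.zero_mem, by simp [hammingNorm]⟩
        · rw [h, one_smul]
          exact hx }
  have hCsubCoe : (↑Csub : Set (Fin n → ZMod 2)) = C0set := rfl
  set O : Submodule (ZMod 2) (Fin n → ZMod 2) := (Bf n).orthogonal Csub with hO
  have hOcoe : (↑O : Set (Fin n → ZMod 2)) = dualSet n C0set := by
    rw [hO, coe_orth, hCsubCoe]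
  have hOO : (Bf n).orthogonal O = Csub :=
    LinearMap.BilinForm.orthogonal_orthogonal Bf_nondeg Bf_refl Csub
  have hdualO : dualSet n (↑O : Set (Fin n → ZMod 2)) = C0set := by
    rw [← coe_orth O, hOO, hCsubCoe]
  have hdualC : dualSet n (↑C : Set (Fin n → ZMod 2)) = ↑C := hsd.symm
  -- cardinalities
  have hak : Nat.card O * Nat.card Csub = 2 ^ n := by
    have h := card_dual_mul_card Csub
    have h2 : dualSet n (↑Csub : Set (Fin n → ZMod 2)) = (↑O : Set (Fin n → ZMod 2)) := by
      rw [hCsubCoe, hOcoe]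
    rw [h2] at h
    exact h
  have hbb : Nat.card C * Nat.card C = 2 ^ n := by
    have h := card_dual_mul_card C
    rw [hdualC] at h
    exact h
  -- index two
  obtain ⟨c₂, hc₂C, hc₂4⟩ := hsing
  set CF : Finset (Fin n → ZMod 2) := FA (↑C : Set (Fin n → ZMod 2)) with hCF
  set E0 : Finset (Fin n → ZMod 2) := CF.filter (fun c => hammingNorm c % 4 = 0) with hE0def
  set E2 : Finset (Fin n → ZMod 2) := CF.filter (fun c => ¬ hammingNorm c % 4 = 0) with hE2def
  have hmemCF : ∀ x, x ∈ CF ↔ x ∈ C := fun x => mem_FA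
  have hE0FA : FA C0set = E0 := by
    ext x
    rw [mem_FA, hE0def, Finset.mem_filter, hmemCF x, hC0set]
    exact Iff.rfl
  have hwt2 : ∀ x ∈ C, ¬(hammingNorm x % 4 = 0) → hammingNorm x % 4 = 2 := by
    intro x hx h
    have := hEven x hx
    omega
  have hccz : ∀ y : Fin n → ZMod 2, y + c₂ + c₂ = y := by
    intro y
    funext i
    show y i + c₂ i + c₂ i = y i
    rw [add_assoc, zmod2_add_self, add_zero]
  have hcardE : E0.card = E2.card := by
    apply Finset.card_bij' (i := fun x _ => x + c₂) (j := fun x _ => x + c₂)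
    · intro x hx
      rw [hE0def, Finset.mem_filter, hmemCF x] at hx
      rw [hE2def, Finset.mem_filter, hmemCF _]
      refine ⟨C.add_mem hx.1 hc₂C, ?_⟩
      rw [hmod4 x hx.1 c₂ hc₂C]
      have h5 := hx.2
      omega
    · intro x hx
      rw [hE2def, Finset.mem_filter, hmemCF x] at hx
      rw [hE0def, Finset.mem_filter, hmemCF _]
      refine ⟨C.add_mem hx.1 hc₂C, ?_⟩
      rw [hmod4 x hx.1 c₂ hc₂C]
      have h5 := hwt2 x hx.1 hx.2
      omega
    · intro x _
      exact hccz x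
    · intro x _
      exact hccz x
  have hbk : Nat.card C = 2 * Nat.card Csub := by
    have h1 : CF.card = E0.card + E2.card := by
      rw [hE0def, hE2def]
      exact (Finset.card_filter_add_card_filter_not _).symm
    have h2 : CF.card = Nat.card C := by rw [hCF, card_FA]; rfl
    have h3 : (FA C0set).card = Nat.card Csub := by rw [card_FA]; rfl
    rw [hE0FA] at h3
    omega
  -- the two transformed sums
  have hS1 : (∑ v ∈ FA (dualSet n C0set),
      ∏ i : Fin n, ((X 0 : MvPolynomial (Fin 2) ℂ) + (χ (v i) * (-Complex.I)) • X 1))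
      = (Nat.card O : ℂ) • ∑ c ∈ E0,
          ((X 0 : MvPolynomial (Fin 2) ℂ) ^ (n - hammingNorm c) * (X 1) ^ (hammingNorm c)) := by
    have h := sum_prod O
    rw [hdualO, hE0FA, hOcoe] at h
    rw [h]
    congr 1
    refine Finset.sum_congr rfl fun c hc => ?_
    rw [hE0def, Finset.mem_filter] at hc
    rw [negI_pow_mod4_zero hc.2, one_smul]
  have hS2 : (∑ v ∈ CF,
      ∏ i : Fin n, ((X 0 : MvPolynomial (Fin 2) ℂ) + (χ (v i) * (-Complex.I)) • X 1))
      = (Nat.card C : ℂ) •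
        ((∑ c ∈ E0, ((X 0 : MvPolynomial (Fin 2) ℂ) ^ (n - hammingNorm c) * (X 1) ^ (hammingNorm c)))
        - ∑ c ∈ E2, ((X 0 : MvPolynomial (Fin 2) ℂ) ^ (n - hammingNorm c) * (X 1) ^ (hammingNorm c))) := by
    have h := sum_prod C
    rw [hdualC, ← hCF] at h
    rw [h]
    congr 1
    rw [← Finset.sum_filter_add_sum_filter_not CF (fun c => hammingNorm c % 4 = 0), ← hE0def,
      ← hE2def]
    have hA0 : (∑ c ∈ E0, ((-Complex.I) ^ (hammingNorm c)) •
        ((X 0 : MvPolynomial (Fin 2) ℂ) ^ (n - hammingNorm c) * (X 1) ^ (hammingNorm c)))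
        = ∑ c ∈ E0, ((X 0 : MvPolynomial (Fin 2) ℂ) ^ (n - hammingNorm c) * (X 1) ^ (hammingNorm c)) := by
      refine Finset.sum_congr rfl fun c hc => ?_
      rw [hE0def, Finset.mem_filter] at hc
      rw [negI_pow_mod4_zero hc.2, one_smul]
    have hA2 : (∑ c ∈ E2, ((-Complex.I) ^ (hammingNorm c)) •
        ((X 0 : MvPolynomial (Fin 2) ℂ) ^ (n - hammingNorm c) * (X 1) ^ (hammingNorm c)))
        = - ∑ c ∈ E2, ((X 0 : MvPolynomial (Fin 2) ℂ) ^ (n - hammingNorm c) * (X 1) ^ (hammingNorm c)) := by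
      rw [← Finset.sum_neg_distrib]
      refine Finset.sum_congr rfl fun c hc => ?_
      rw [hE2def, Finset.mem_filter, hmemCF c] at hc
      rw [negI_pow_mod4_two (hwt2 c hc.1 hc.2)]
      exact neg_one_smul _ _
    rw [hA0, hA2, ← sub_eq_add_neg]
  -- shadow split
  have hsubset : (↑C : Set (Fin n → ZMod 2)) ⊆ dualSet n C0set := by
    intro c hc c' hc'
    exact hCC c hc c' hc'.1
  have hunion : FA (dualSet n C0set) = FA (dualSet n C0set \ ↑C) ∪ CF := by
    ext x
    rw [Finset.mem_union, mem_FA, mem_FA, hmemCF x]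
    constructor
    · intro hx
      by_cases h : x ∈ C
      · exact Or.inr h
      · exact Or.inl ⟨hx, h⟩
    · rintro (⟨hx, _⟩ | hx)
      · exact hx
      · exact hsubset hx
  have hdisj : Disjoint (FA (dualSet n C0set \ ↑C)) CF := by
    rw [Finset.disjoint_left]
    intro x hx hx2
    rw [mem_FA] at hx
    exact hx.2 ((hmemCF x).mp hx2)
  have hshadow : (∑ v ∈ FA (dualSet n C0set \ ↑C),
      ∏ i : Fin n, ((X 0 : MvPolynomial (Fin 2) ℂ) + (χ (v i) * (-Complex.I)) • X 1))
      = (∑ v ∈ FA (dualSet n C0set),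
          ∏ i : Fin n, ((X 0 : MvPolynomial (Fin 2) ℂ) + (χ (v i) * (-Complex.I)) • X 1))
        - (∑ v ∈ CF,
          ∏ i : Fin n, ((X 0 : MvPolynomial (Fin 2) ℂ) + (χ (v i) * (-Complex.I)) • X 1)) := by
    rw [hunion, Finset.sum_union hdisj]
    abel
  -- weight enumerator split
  have hAeq : wEnum n ↑C
      = (∑ c ∈ E0, ((X 0 : MvPolynomial (Fin 2) ℂ) ^ (n - hammingNorm c) * (X 1) ^ (hammingNorm c)))
      + ∑ c ∈ E2, ((X 0 : MvPolynomial (Fin 2) ℂ) ^ (n - hammingNorm c) * (X 1) ^ (hammingNorm c)) := by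
    rw [wEnum, sum_indicator, ← hCF,
      ← Finset.sum_filter_add_sum_filter_not CF (fun c => hammingNorm c % 4 = 0), ← hE0def,
      ← hE2def]
  -- scalar identities
  have hcast1 : ((Nat.card C : ℂ)) * (Nat.card O : ℂ) = 2 * 2 ^ n := by
    have hnat1 : Nat.card C * Nat.card O = 2 * 2 ^ n := by
      calc Nat.card C * Nat.card O = 2 * (Nat.card O * Nat.card Csub) := by rw [hbk]; ring
      _ = 2 * 2 ^ n := by rw [hak]
    have h6 := congrArg (fun m : ℕ => (m : ℂ)) hnat1
    push_cast at h6
    exact h6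
  have hcast2 : ((Nat.card C : ℂ)) * (Nat.card C : ℂ) = 2 ^ n := by
    have h6 := congrArg (fun m : ℕ => (m : ℂ)) hbb
    push_cast at h6
    exact h6
  have h2n : ((2 : ℂ)) ^ n ≠ 0 := pow_ne_zero _ two_ne_zero
  have hC1 : ((Nat.card C : ℂ) / 2 ^ n) * (Nat.card O : ℂ) = 2 := by
    rw [div_mul_eq_mul_div, hcast1, mul_div_assoc, div_self h2n, mul_one]
  have hC2 : ((Nat.card C : ℂ) / 2 ^ n) * (Nat.card C : ℂ) = 1 := by
    rw [div_mul_eq_mul_div, hcast2, div_self h2n]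
  -- the main identity
  have hmain : wEnum n ↑C = ((Nat.card C : ℂ) / 2 ^ n) •
      (∑ v ∈ FA (dualSet n C0set \ ↑C),
        ∏ i : Fin n, ((X 0 : MvPolynomial (Fin 2) ℂ) + (χ (v i) * (-Complex.I)) • X 1)) := by
    rw [hAeq, hshadow, hS1, hS2, smul_sub, smul_smul, smul_smul, hC1, hC2, one_smul, two_smul]
    abel
  -- divisibility
  have hCI : (MvPolynomial.C Complex.I : MvPolynomial (Fin 2) ℂ) * MvPolynomial.C Complex.I
      = -1 := by
    rw [← map_mul, Complex.I_mul_I, map_neg, map_one]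
  have hfactorpow : ((X 0 : MvPolynomial (Fin 2) ℂ) ^ 2 + (X 1) ^ 2) ^ d
      = (((X 0 : MvPolynomial (Fin 2) ℂ) - Complex.I • X 1) * (X 0 + Complex.I • X 1)) ^ d := by
    congr 1
    rw [smul_eq_C_mul]
    linear_combination ((X 1 : MvPolynomial (Fin 2) ℂ) ^ 2) * hCI
  have honeC : (fun _ => (1 : ZMod 2)) ∈ C := by
    rw [← SetLike.mem_coe, hsd]
    intro c hc
    simp only [one_mul]
    exact hsum0 c hc
  have hdvd : ∀ s ∈ FA (dualSet n C0set \ ↑C),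
      ((X 0 : MvPolynomial (Fin 2) ℂ) ^ 2 + (X 1) ^ 2) ^ d ∣
        ∏ i : Fin n, ((X 0 : MvPolynomial (Fin 2) ℂ) + (χ (s i) * (-Complex.I)) • X 1) := by
    intro s hs
    rw [mem_FA] at hs
    obtain ⟨hsdual, hsC⟩ := hs
    have hub : d ≤ hammingNorm s := hd1 s ⟨hsdual, hsC⟩
    set s1 : Fin n → ZMod 2 := s + fun _ => (1 : ZMod 2) with hs1
    have hs' : s1 ∈ dualSet n C0set \ (↑C : Set (Fin n → ZMod 2)) := by
      constructor
      · intro c' hc'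
        have h1 : (∑ i, s1 i * c' i)
            = (∑ i, s i * c' i) + ∑ i, c' i := by
          rw [← Finset.sum_add_distrib]
          refine Finset.sum_congr rfl fun i _ => ?_
          show (s i + 1) * c' i = s i * c' i + c' i
          ring
        rw [h1, hsdual c' hc', hsum0 c' hc'.1, add_zero]
      · intro hmem
        apply hsC
        have h2 := C.add_mem hmem honeC
        have h3 : s1 + (fun _ => (1 : ZMod 2)) = s := by
          funext i
          show s i + 1 + 1 = s i
          rw [add_assoc, zmod2_add_self, add_zero]
        rw [h3] at h2
        exact h2
    have hwt' : hammingNorm s1 = n - hammingNorm s := by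
      rw [hs1]
      exact wt_compl s
    have hub2 : d ≤ n - hammingNorm s := by
      have h4 := hd1 _ hs'
      rw [hwt'] at h4
      exact h4
    have hle : hammingNorm s ≤ n := hammingNorm_le_n s
    rw [prod_factored s, hfactorpow, mul_pow]
    obtain ⟨a1, ha1⟩ : ∃ a1, n - hammingNorm s = d + a1 := ⟨n - hammingNorm s - d, by omega⟩
    obtain ⟨a2, ha2⟩ : ∃ a2, hammingNorm s = d + a2 := ⟨hammingNorm s - d, by omega⟩
    refine ⟨((X 0 : MvPolynomial (Fin 2) ℂ) - Complex.I • X 1) ^ a1 *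
      ((X 0 : MvPolynomial (Fin 2) ℂ) + Complex.I • X 1) ^ a2, ?_⟩
    rw [ha1, ha2, pow_add, pow_add]
    ring
  rw [hmain, smul_eq_C_mul]
  exact Dvd.dvd.mul_left (Finset.dvd_sum hdvd) _
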